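/- arXiv:2201.09591 — 2 statements merged into one kernel-verified Lean document; each statement's English description precedes it below -/
import Mathlib

section
/- Let 1 < p < ∞, let v be a bounded radial weight on D, and let g be analytic on D. Suppose (1) sup_{z∈D} |g(z)|^p v(z) < ∞, and (2) |g(z)|^p v(z) is bounded away from zero on some triangle with vertices 1−d+li, 1−d−li and 1, where 0 < l < d < 1. Then for every c ∈ (1/p, 2/p) the function f_c(z) := g(z)/(1−z)^c belongs to A^p_v, and ‖f_c‖_{A^p_v} → ∞ as c → 2/p. -/
open MeasureTheory Complex Filter Topology

noncomputable section

/-- The open unit disk in the complex plane. -/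
def unitDisk : Set ℂ := Metric.ball 0 1

/-- A radial weight: continuous, strictly positive, and rotation invariant on the disk. -/
structure IsRadialWeight (v : ℂ → ℝ) : Prop where
  cont : ContinuousOn v unitDisk
  pos : ∀ z ∈ unitDisk, 0 < v z
  radial : ∀ z ∈ unitDisk, v z = v ((‖z‖ : ℝ) : ℂ)

/-- A weight tending to zero at the boundary of the disk. -/
def VanishingWeight (v : ℂ → ℝ) : Prop :=
  ∀ ε > (0:ℝ), ∃ r < (1:ℝ), ∀ z ∈ unitDisk, r < ‖z‖ → v z < ε

/-- `‖f‖_{L^p_v}^p`, the p-th power of the weighted Bergman/L^p norm. -/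
def bergmanNormP (p : ℝ) (v : ℂ → ℝ) (f : ℂ → ℂ) : ℝ :=
  ∫ z in unitDisk, ‖f z‖ ^ p * v z / Real.pi

/-- The weighted Bergman/L^p norm. -/
def bergmanNorm (p : ℝ) (v : ℂ → ℝ) (f : ℂ → ℂ) : ℝ :=
  bergmanNormP p v f ^ (1 / p)

/-- Membership in the weighted Bergman space `A^p_v`. -/
def MemBergman (p : ℝ) (v : ℂ → ℝ) (f : ℂ → ℂ) : Prop :=
  DifferentiableOn ℂ f unitDisk ∧
    IntegrableOn (fun z => ‖f z‖ ^ p * v z / Real.pi) unitDisk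

/-- The weighted sup-norm `‖f‖_{L^∞_v}`. -/
def hinftyNorm (v : ℂ → ℝ) (f : ℂ → ℂ) : ℝ :=
  ⨆ z : unitDisk, ‖f z.1‖ * v z.1

/-- Membership in the weighted Banach space `H^∞_v`. -/
def MemHinfty (v : ℂ → ℝ) (f : ℂ → ℂ) : Prop :=
  DifferentiableOn ℂ f unitDisk ∧
    BddAbove (Set.range fun z : unitDisk => ‖f z.1‖ * v z.1)

/-- Membership in the subspace `H^0_v` of functions vanishing at the boundary. -/
def MemH0 (v : ℂ → ℝ) (f : ℂ → ℂ) : Prop :=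
  MemHinfty v f ∧ ∀ ε > (0:ℝ), ∃ r < (1:ℝ), ∀ z ∈ unitDisk, r < ‖z‖ → ‖f z‖ * v z < ε

/-- The p-th power of the Hardy space norm. -/
def hardyNormP (p : ℝ) (f : ℂ → ℂ) : ℝ :=
  ⨆ r : Set.Ico (0:ℝ) 1,
    (1 / (2 * Real.pi)) *
      ∫ θ in (0:ℝ)..(2 * Real.pi), ‖f (((r : ℝ) : ℂ) * Complex.exp ((θ : ℂ) * Complex.I))‖ ^ p

/-- The Hardy space norm. -/
def hardyNorm (p : ℝ) (f : ℂ → ℂ) : ℝ := hardyNormP p f ^ (1 / p)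

/-- Membership in the Hardy space `H^p`. -/
def MemHardy (p : ℝ) (f : ℂ → ℂ) : Prop :=
  DifferentiableOn ℂ f unitDisk ∧
    BddAbove (Set.range fun r : Set.Ico (0:ℝ) 1 =>
      (1 / (2 * Real.pi)) *
        ∫ θ in (0:ℝ)..(2 * Real.pi), ‖f (((r : ℝ) : ℂ) * Complex.exp ((θ : ℂ) * Complex.I))‖ ^ p)

/-- Linearity of an operator on functions. -/
def IsLinearOp (T : (ℂ → ℂ) → ℂ → ℂ) : Prop :=
  (∀ f g, T (f + g) = T f + T g) ∧ ∀ (c : ℂ) (f), T (c • f) = c • T f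

/-- The operator norm of `T` with respect to the given membership predicate and norms. -/
def opNormF (memIn : (ℂ → ℂ) → Prop) (nIn nOut : (ℂ → ℂ) → ℝ)
    (T : (ℂ → ℂ) → ℂ → ℂ) : ℝ :=
  sInf { C : ℝ | 0 ≤ C ∧ ∀ f, memIn f → nOut (T f) ≤ C * nIn f }

/-- A bounded linear operator between the given function spaces. -/
def IsBoundedOp (memIn memOut : (ℂ → ℂ) → Prop) (nIn nOut : (ℂ → ℂ) → ℝ)
    (T : (ℂ → ℂ) → ℂ → ℂ) : Prop :=
  IsLinearOp T ∧ (∀ f, memIn f → memOut (T f)) ∧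
    ∃ C : ℝ, ∀ f, memIn f → nOut (T f) ≤ C * nIn f

/-- A compact operator: bounded, and every bounded sequence has a subsequence whose image
converges in the target norm. -/
def IsCompactOp (memIn memOut : (ℂ → ℂ) → Prop) (nIn nOut : (ℂ → ℂ) → ℝ)
    (L : (ℂ → ℂ) → ℂ → ℂ) : Prop :=
  IsBoundedOp memIn memOut nIn nOut L ∧
    ∀ f : ℕ → ℂ → ℂ, (∀ n, memIn (f n) ∧ nIn (f n) ≤ 1) →
      ∃ (g : ℂ → ℂ) (σ : ℕ → ℕ), StrictMono σ ∧
        Tendsto (fun n => nOut (L (f (σ n)) - g)) atTop (nhds 0)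

/-- The essential norm: distance to the compact operators. -/
def essNormF (memIn memOut : (ℂ → ℂ) → Prop) (nIn nOut : (ℂ → ℂ) → ℝ)
    (T : (ℂ → ℂ) → ℂ → ℂ) : ℝ :=
  sInf { c : ℝ | ∃ L, IsCompactOp memIn memOut nIn nOut L ∧
    c = opNormF memIn nIn nOut (fun f => T f - L f) }

/-- The norm of the evaluation functional `δ_z`. -/
def evalNorm (mem : (ℂ → ℂ) → Prop) (n : (ℂ → ℂ) → ℝ) (z : ℂ) : ℝ :=
  sInf { C : ℝ | 0 ≤ C ∧ ∀ f, mem f → ‖f z‖ ≤ C * n f }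

/-- Reflexivity of `A^p_v`, expressed through weak (= pointwise, for bounded sequences)
sequential compactness of the closed unit ball. -/
def ReflexiveBergman (p : ℝ) (v : ℂ → ℝ) : Prop :=
  ∀ f : ℕ → ℂ → ℂ, (∀ n, MemBergman p v (f n) ∧ bergmanNorm p v (f n) ≤ 1) →
    ∃ (g : ℂ → ℂ) (σ : ℕ → ℕ), StrictMono σ ∧ MemBergman p v g ∧ bergmanNorm p v g ≤ 1 ∧
      ∀ z ∈ unitDisk, Tendsto (fun n => f (σ n) z) atTop (nhds (g z))

/-- The self-maps `φ_t(z) = t/((t-1)z+1)`. -/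
def phiT (t : ℝ) (z : ℂ) : ℂ := (t : ℂ) / (((t : ℂ) - 1) * z + 1)

/-- `T_t(z) = K(z, x_z(t)) ⬝ ∂x_z/∂t = K(z, φ_t(z)) (1-z)/((t-1)z+1)²`. -/
def Tker (K : ℂ → ℂ → ℂ) (t : ℝ) (z : ℂ) : ℂ :=
  K z (phiT t z) * ((1 - z) / (((t : ℂ) - 1) * z + 1) ^ 2)

/-- The generalized Hilbert matrix operator `I_K f(z) = ∫₀¹ f(x) K(z,x) dx`. -/
def IKop (K : ℂ → ℂ → ℂ) (f : ℂ → ℂ) (z : ℂ) : ℂ :=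
  ∫ x in (0:ℝ)..1, f ((x : ℝ) : ℂ) * K z ((x : ℝ) : ℂ)

/-- The classical Hilbert matrix operator `𝓗 f(z) = ∫₀¹ f(x)/(1-zx) dx`. -/
def hilbertOp (f : ℂ → ℂ) (z : ℂ) : ℂ :=
  ∫ x in (0:ℝ)..1, f ((x : ℝ) : ℂ) / (1 - z * ((x : ℝ) : ℂ))

/-- The standing assumptions on the kernel `K`: analytic on `D × D` with `K(z,·)` bounded. -/
def GoodKernel (K : ℂ → ℂ → ℂ) : Prop :=
  DifferentiableOn ℂ (fun q : ℂ × ℂ => K q.1 q.2) (unitDisk ×ˢ unitDisk) ∧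
    ∀ z ∈ unitDisk, ∃ M : ℝ, ∀ w ∈ unitDisk, ‖K z w‖ ≤ M

/-- The standard weight `(1+α)(1-|z|²)^α` of `A^p_α`. -/
def stdWeight (α : ℝ) (z : ℂ) : ℝ := (1 + α) * (1 - ‖z‖ ^ 2) ^ α

/-- The standard weight `(1-|z|²)^α` of `H^∞_α`. -/
def stdWeightH (α : ℝ) (z : ℂ) : ℝ := (1 - ‖z‖ ^ 2) ^ α

/-- The test functions `f_c = g/(1-z)^c`. -/
def fcFun (g : ℂ → ℂ) (c : ℝ) (z : ℂ) : ℂ := g z / (1 - z) ^ (c : ℂ)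

/-- The functions `C_c(z) = ∫₀¹ (1/(1-t) - z)^c (g(φ_t(z))/g(z)) T_t(z) dt`. -/
def CcFun (K : ℂ → ℂ → ℂ) (g : ℂ → ℂ) (c : ℝ) (z : ℂ) : ℂ :=
  ∫ t in (0:ℝ)..1,
    ((1 / (1 - (t : ℂ)) - z) ^ (c : ℂ)) * (g (phiT t z) / g z) * Tker K t z

/-- The weighted composition operator `ψ C_φ`. -/
def wComp (ψ φ : ℂ → ℂ) (f : ℂ → ℂ) (z : ℂ) : ℂ := ψ z * f (φ z)

/-- `w_t(z) = φ_t(z)/t = 1/(1-(1-t)z)`. -/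
def wT (t : ℝ) (z : ℂ) : ℂ := 1 / (1 - (1 - (t : ℂ)) * z)

/-- The Beta function as an integral. -/
def betaFn (x y : ℝ) : ℝ := ∫ t in (0:ℝ)..1, t ^ (x - 1) * (1 - t) ^ (y - 1)


-- ========== Auxiliary lemmas ==========

lemma aux_abs_rpow (r : ℝ) (hr : -1 < r) (A : ℝ) (hA : 0 < A) :
    IntegrableOn (fun y : ℝ => |y| ^ r) (Set.Ioo (-A) A) := by
  have hpos : IntegrableOn (fun y : ℝ => |y| ^ r) (Set.Ioo (0:ℝ) A) :=
    ((intervalIntegral.integrableOn_Ioo_rpow_iff hA).2 hr).congr_fun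
      (fun y hy => by rw [abs_of_pos hy.1]) measurableSet_Ioo
  have hneg : IntegrableOn (fun y : ℝ => |y| ^ r) (Set.Ioo (-A) 0) := by
    have h := (Measure.measurePreserving_neg (volume : Measure ℝ)).integrableOn_comp_preimage
      (MeasurableEquiv.neg ℝ).measurableEmbedding (f := fun y : ℝ => |y| ^ r) (s := Set.Ioo (-A) 0)
    rw [← h]
    have hs : (Neg.neg ⁻¹' Set.Ioo (-A) 0) = Set.Ioo (0:ℝ) A := by
      ext x; simp only [Set.mem_preimage, Set.mem_Ioo]
      constructor <;> intro ⟨h1, h2⟩ <;> constructor <;> linarith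
    rw [hs]
    exact hpos.congr_fun (fun y _ => by simp [Function.comp, abs_neg]) measurableSet_Ioo
  have hsub : Set.Ioo (-A) A ⊆ Set.Ioo (-A) 0 ∪ Set.Icc (0:ℝ) 0 ∪ Set.Ioo (0:ℝ) A := by
    intro x hx; rcases lt_trichotomy x 0 with h|h|h
    · exact Or.inl (Or.inl ⟨hx.1, h⟩)
    · exact Or.inl (Or.inr (by simp [h]))
    · exact Or.inr ⟨h, hx.2⟩
  refine IntegrableOn.mono_set ((hneg.union ?_).union hpos) hsub
  simp [IntegrableOn]

lemma aux_one_sub_rpow (r : ℝ) (hr : -1 < r) :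
    IntegrableOn (fun x : ℝ => |1 - x| ^ r) (Set.Ioo (-2:ℝ) 2) := by
  have h := (Measure.measurePreserving_sub_left (volume : Measure ℝ) 1).integrableOn_comp_preimage
    (MeasurableEquiv.subLeft (1:ℝ)).measurableEmbedding (f := fun y : ℝ => |y| ^ r)
    (s := Set.Ioo (-4:ℝ) 4)
  have hs : ((fun x : ℝ => 1 - x) ⁻¹' Set.Ioo (-4:ℝ) 4) = Set.Ioo (-3:ℝ) 5 := by
    ext x; simp only [Set.mem_preimage, Set.mem_Ioo]
    constructor <;> intro ⟨h1, h2⟩ <;> constructor <;> linarith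
  have h2 : IntegrableOn (fun x : ℝ => |1 - x| ^ r) (Set.Ioo (-3:ℝ) 5) := by
    have := h.2 (aux_abs_rpow r hr 4 (by norm_num))
    rwa [hs] at this
  exact h2.mono_set (fun x hx => ⟨by linarith [hx.1], by linarith [hx.2]⟩)

lemma measurableSet_unitDisk : MeasurableSet unitDisk := measurableSet_ball

lemma aux_sq :
    unitDisk ⊆ Complex.measurableEquivRealProd ⁻¹' (Set.Ioo (-2:ℝ) 2 ×ˢ Set.Ioo (-2:ℝ) 2) := by
  intro z hz
  have hz' : ‖z‖ < 1 := by simpa [unitDisk, Complex.dist_eq] using hz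
  have h1 : |z.re| < 1 := lt_of_le_of_lt (Complex.abs_re_le_norm z) hz'
  have h2 : |z.im| < 1 := lt_of_le_of_lt (Complex.abs_im_le_norm z) hz'
  rw [abs_lt] at h1 h2
  show (z.re, z.im) ∈ Set.Ioo (-2:ℝ) 2 ×ˢ Set.Ioo (-2:ℝ) 2
  exact ⟨⟨by linarith [h1.1], by linarith [h1.2]⟩, ⟨by linarith [h2.1], by linarith [h2.2]⟩⟩

lemma aux_prod_int (a b : ℝ) (ha : -1 < a) (hb : -1 < b) :
    IntegrableOn (fun z : ℂ => |1 - z.re| ^ a * |z.im| ^ b)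
      (Complex.measurableEquivRealProd ⁻¹' (Set.Ioo (-2:ℝ) 2 ×ˢ Set.Ioo (-2:ℝ) 2)) := by
  have hprod : IntegrableOn (fun p : ℝ × ℝ => |1 - p.1| ^ a * |p.2| ^ b)
      (Set.Ioo (-2:ℝ) 2 ×ˢ Set.Ioo (-2:ℝ) 2) volume := by
    rw [IntegrableOn, Measure.volume_eq_prod, ← Measure.prod_restrict]
    exact (aux_one_sub_rpow a ha).mul_prod (aux_abs_rpow b hb 2 (by norm_num))
  have h3 := (Complex.volume_preserving_equiv_real_prod.integrableOn_comp_preimage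
    Complex.measurableEquivRealProd.measurableEmbedding).2 hprod
  refine h3.congr_fun (fun z _ => ?_) ?_
  · rw [Function.comp_apply, Complex.measurableEquivRealProd_apply]
  · exact Complex.measurableEquivRealProd.measurable (measurableSet_Ioo.prod measurableSet_Ioo)

lemma mem_disk_re {z : ℂ} (hz : z ∈ unitDisk) : z.re < 1 ∧ ‖z‖ < 1 := by
  have hz' : ‖z‖ < 1 := by simpa [unitDisk, Complex.dist_eq] using hz
  exact ⟨lt_of_le_of_lt (le_trans (le_abs_self _) (Complex.abs_re_le_norm z)) hz', hz'⟩

lemma one_sub_ne {z : ℂ} (hz : z ∈ unitDisk) : (1 : ℂ) - z ≠ 0 := by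
  intro h
  have h2 : z = 1 := by linear_combination -h
  have h3 := (mem_disk_re hz).1
  rw [h2] at h3; simp at h3

lemma norm_fc (g : ℂ → ℂ) (c p : ℝ) (hp : 0 ≤ p) {z : ℂ} (hz : z ∈ unitDisk) :
    ‖fcFun g c z‖ ^ p = ‖g z‖ ^ p * ‖(1:ℂ) - z‖ ^ (-(c * p)) := by
  have h1 : (1:ℂ) - z ≠ 0 := one_sub_ne hz
  have habs : ‖(1 - z) ^ (c:ℂ)‖ = ‖(1:ℂ) - z‖ ^ c := by
    rw [Complex.norm_cpow_of_ne_zero h1]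
    simp
  rw [fcFun, norm_div, habs, Real.div_rpow (norm_nonneg _) (Real.rpow_nonneg (norm_nonneg _) _),
    ← Real.rpow_mul (norm_nonneg _), Real.rpow_neg (norm_nonneg _), div_eq_mul_inv]

lemma im_zero_null : (volume : Measure ℂ) {z : ℂ | z.im = 0} = 0 := by
  have h : {z : ℂ | z.im = 0}
      = Complex.measurableEquivRealProd ⁻¹' (Set.univ ×ˢ ({0} : Set ℝ)) := by
    ext z; simp [Complex.measurableEquivRealProd_apply, eq_comm]
  rw [h, Complex.volume_preserving_equiv_real_prod.measure_preimage
    ((MeasurableSet.univ.prod (measurableSet_singleton 0)).nullMeasurableSet)]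
  rw [Measure.volume_eq_prod, Measure.prod_prod]
  simp

lemma diff_fc (g : ℂ → ℂ) (hg : DifferentiableOn ℂ g unitDisk) (c : ℝ) :
    DifferentiableOn ℂ (fcFun g c) unitDisk := by
  intro z hz
  have hga : DifferentiableAt ℂ g z := hg.differentiableAt (Metric.isOpen_ball.mem_nhds hz)
  have hslit : (1 : ℂ) - z ∈ Complex.slitPlane := by
    refine Complex.mem_slitPlane_iff.2 (Or.inl ?_)
    have := (mem_disk_re hz).1
    simp only [Complex.sub_re, Complex.one_re]
    linarith
  have hb : DifferentiableAt ℂ (fun w : ℂ => (1 - w) ^ (c:ℂ)) z :=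
    DifferentiableAt.cpow ((differentiableAt_const 1).sub differentiableAt_id)
      (differentiableAt_const _) hslit
  have hne : ((1:ℂ) - z) ^ (c:ℂ) ≠ 0 := by
    rw [Ne, Complex.cpow_eq_zero_iff]
    exact fun h => (one_sub_ne hz) h.1
  exact ((hga.div hb hne)).differentiableWithinAt

lemma cont_E (p : ℝ) (hp : 0 ≤ p) (v : ℂ → ℝ) (hv : IsRadialWeight v) (g : ℂ → ℂ)
    (hg : DifferentiableOn ℂ g unitDisk) (c : ℝ) :
    ContinuousOn (fun z => ‖fcFun g c z‖ ^ p * v z / Real.pi) unitDisk :=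
  (((diff_fc g hg c).continuousOn.norm.rpow_const fun _ _ => Or.inr hp).mul hv.cont).div_const _

lemma integrand_integrable (p : ℝ) (hp : 1 < p) (v : ℂ → ℝ) (hv : IsRadialWeight v)
    (g : ℂ → ℂ) (hg : DifferentiableOn ℂ g unitDisk)
    (M : ℝ) (hM : ∀ z ∈ unitDisk, ‖g z‖ ^ p * v z ≤ M)
    (c : ℝ) (hc : c ∈ Set.Ioo (1/p) (2/p)) :
    IntegrableOn (fun z => ‖fcFun g c z‖ ^ p * v z / Real.pi) unitDisk := by
  have hp0 : (0:ℝ) < p := lt_trans zero_lt_one hp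
  set s := c * p with hs
  have hs1 : 1 < s := by
    rw [hs]; calc (1:ℝ) = (1/p) * p := by field_simp
    _ < c * p := by apply mul_lt_mul_of_pos_right hc.1 hp0
  have hs2 : s < 2 := by
    rw [hs]; calc c * p < (2/p) * p := mul_lt_mul_of_pos_right hc.2 hp0
    _ = 2 := by field_simp
  have hM0 : 0 ≤ M := le_trans
    (mul_nonneg (Real.rpow_nonneg (norm_nonneg _) _) (hv.pos 0 (by simp [unitDisk])).le)
    (hM 0 (by simp [unitDisk]))
  have hdom : IntegrableOn
      (fun z : ℂ => (M / Real.pi) * (|1 - z.re| ^ (-(s/2)) * |z.im| ^ (-(s/2)))) unitDisk := by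
    refine Integrable.const_mul ?_ _
    exact (aux_prod_int _ _ (by linarith) (by linarith)).mono_set aux_sq
  refine Integrable.mono' hdom ?_ ?_
  · exact (cont_E p hp0.le v hv g hg c).aestronglyMeasurable measurableSet_unitDisk
  · have hae1 : ∀ᵐ z ∂(volume.restrict unitDisk), z ∈ unitDisk :=
      ae_restrict_mem measurableSet_unitDisk
    have hae2 : ∀ᵐ z ∂(volume.restrict unitDisk), z.im ≠ 0 := by
      refine ae_restrict_of_ae ?_
      rw [ae_iff]
      convert im_zero_null using 2
      simp
    filter_upwards [hae1, hae2] with z hz him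
    have hre : z.re < 1 := (mem_disk_re hz).1
    have hne : (1:ℂ) - z ≠ 0 := one_sub_ne hz
    have hnorm_pos : 0 < ‖(1:ℂ) - z‖ := norm_pos_iff.2 hne
    have hb1 : |1 - z.re| ≤ ‖(1:ℂ) - z‖ := by
      have := Complex.abs_re_le_norm (1 - z)
      simpa using this
    have hb2 : |z.im| ≤ ‖(1:ℂ) - z‖ := by
      have := Complex.abs_im_le_norm (1 - z)
      simpa [abs_neg] using this
    have hre0 : 0 < |1 - z.re| := abs_pos.2 (by linarith)
    have him0 : 0 < |z.im| := abs_pos.2 him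
    have key : ‖(1:ℂ) - z‖ ^ (-s) ≤ |1 - z.re| ^ (-(s/2)) * |z.im| ^ (-(s/2)) := by
      have e1 : ‖(1:ℂ) - z‖ ^ (-s) = ‖(1:ℂ) - z‖ ^ (-(s/2)) * ‖(1:ℂ) - z‖ ^ (-(s/2)) := by
        rw [← Real.rpow_add hnorm_pos]; ring_nf
      rw [e1]
      exact mul_le_mul (Real.rpow_le_rpow_of_nonpos hre0 hb1 (by linarith))
        (Real.rpow_le_rpow_of_nonpos him0 hb2 (by linarith))
        (Real.rpow_nonneg hnorm_pos.le _) (Real.rpow_nonneg hre0.le _)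
    have hEval : ‖fcFun g c z‖ ^ p * v z / Real.pi
        = (‖g z‖ ^ p * v z) * ‖(1:ℂ) - z‖ ^ (-s) / Real.pi := by
      rw [norm_fc g c p hp0.le hz]; ring
    have hE0 : 0 ≤ ‖fcFun g c z‖ ^ p * v z / Real.pi := by
      have := (hv.pos z hz).le
      positivity
    rw [Real.norm_of_nonneg hE0, hEval]
    calc (‖g z‖ ^ p * v z) * ‖(1:ℂ) - z‖ ^ (-s) / Real.pi
        ≤ M * (|1 - z.re| ^ (-(s/2)) * |z.im| ^ (-(s/2))) / Real.pi := by
          refine div_le_div_of_nonneg_right ?_ Real.pi_pos.le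
          exact mul_le_mul (hM z hz) key (Real.rpow_nonneg hnorm_pos.le _) hM0
      _ = (M / Real.pi) * (|1 - z.re| ^ (-(s/2)) * |z.im| ^ (-(s/2))) := by ring

lemma mem_triangle (d l : ℝ) (hl : 0 < l) (hld : l < d) (hd : d < 1) {x y : ℝ}
    (hx1 : 1 - d ≤ x) (hx2 : x < 1) (hy : |y| ≤ (l/d) * (1 - x)) :
    (x:ℂ) + (y:ℂ) * Complex.I ∈
      convexHull ℝ ({1 - (d:ℂ) + (l:ℂ) * Complex.I, 1 - (d:ℂ) - (l:ℂ) * Complex.I, 1} : Set ℂ) := by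
  have hd0 : (0:ℝ) < d := lt_trans hl hld
  set A : ℂ := 1 - (d:ℂ) + (l:ℂ) * Complex.I with hA
  set B : ℂ := 1 - (d:ℂ) - (l:ℂ) * Complex.I with hB
  set T := convexHull ℝ ({A, B, 1} : Set ℂ)
  have hAT : A ∈ T := subset_convexHull _ _ (by simp)
  have hBT : B ∈ T := subset_convexHull _ _ (by simp)
  have hCT : (1:ℂ) ∈ T := subset_convexHull _ _ (by simp)
  set t : ℝ := (1 - x)/d with ht
  have ht0 : 0 < t := div_pos (by linarith) hd0
  have ht1 : t ≤ 1 := by rw [div_le_one hd0]; linarith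
  have hlt0 : 0 < l * t := mul_pos hl ht0
  have hyt : |y| ≤ l * t := by
    rw [ht]
    calc |y| ≤ (l/d) * (1-x) := hy
    _ = l * ((1-x)/d) := by ring
  set u : ℝ := (y/(l*t) + 1)/2 with hu
  have habs := abs_le.1 hyt
  have hu0 : 0 ≤ u := by
    have h : -1 ≤ y/(l*t) := by
      rw [neg_le, ← neg_div]
      exact div_le_one_of_le₀ (by linarith [habs.1]) hlt0.le
    rw [hu]; linarith
  have hu1 : u ≤ 1 := by
    have h : y/(l*t) ≤ 1 := div_le_one_of_le₀ habs.2 hlt0.le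
    rw [hu]; linarith
  set P : ℂ := u • A + (1 - u) • B with hP
  have hPT : P ∈ T := (convex_convexHull ℝ _).segment_subset hAT hBT
    ⟨u, 1 - u, hu0, by linarith, by ring, rfl⟩
  have hfinal : t • P + (1 - t) • (1:ℂ) = (x:ℂ) + (y:ℂ) * Complex.I := by
    have hc1 : ((t:ℂ)) * d = 1 - x := by
      have h : t * d = 1 - x := by rw [ht, div_mul_cancel₀ _ hd0.ne']
      exact_mod_cast congrArg Complex.ofReal h
    have hc2 : (2*(u:ℂ) - 1) * ((l:ℂ)*(t:ℂ)) = (y:ℂ) := by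
      have h : (2*u - 1) * (l*t) = y := by
          rw [hu, show 2 * ((y / (l * t) + 1) / 2) - 1 = y / (l * t) by ring, div_mul_cancel₀ _ hlt0.ne']
      exact_mod_cast congrArg Complex.ofReal h
    rw [hP, hA, hB]
    simp only [Complex.real_smul]
    push_cast
    linear_combination (-1 : ℂ) * hc1 + Complex.I * hc2
  exact hfinal ▸ (convex_convexHull ℝ _).segment_subset hPT hCT
    ⟨t, 1 - t, ht0.le, by linarith, by ring, rfl⟩

/-- Dyadic rectangles accumulating at `1` inside the Stolz triangle. -/
def Qrect (d lam : ℝ) (k : ℕ) : Set ℂ :=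
  Complex.measurableEquivRealProd ⁻¹'
    (Set.Ioo (1 - d/2^k) (1 - d/2^k/2) ×ˢ Set.Ioo (-(lam * (d/2^k)/2)) (lam * (d/2^k)/2))

lemma mem_Qrect {d lam : ℝ} {k : ℕ} {z : ℂ} :
    z ∈ Qrect d lam k ↔ (1 - d/2^k < z.re ∧ z.re < 1 - d/2^k/2) ∧
      (-(lam * (d/2^k)/2) < z.im ∧ z.im < lam * (d/2^k)/2) := Iff.rfl

lemma measurableSet_Qrect (d lam : ℝ) (k : ℕ) : MeasurableSet (Qrect d lam k) :=
  Complex.measurableEquivRealProd.measurable (measurableSet_Ioo.prod measurableSet_Ioo)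

lemma volume_Qrect {d lam : ℝ} (hd : 0 < d) (hlam : 0 < lam) (k : ℕ) :
    volume (Qrect d lam k) = ENNReal.ofReal (d/2^k/2) * ENNReal.ofReal (lam * (d/2^k)) := by
  have hδ : (0:ℝ) < d/2^k := by positivity
  rw [Qrect, Complex.volume_preserving_equiv_real_prod.measure_preimage
    ((measurableSet_Ioo.prod measurableSet_Ioo)).nullMeasurableSet,
    Measure.volume_eq_prod, Measure.prod_prod, Real.volume_Ioo, Real.volume_Ioo]
  congr 1 <;> congr 1 <;> ring

lemma volume_Qrect_ne_top {d lam : ℝ} (hd : 0 < d) (hlam : 0 < lam) (k : ℕ) :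
    volume (Qrect d lam k) ≠ ⊤ := by
  rw [volume_Qrect hd hlam k]
  exact ENNReal.mul_ne_top ENNReal.ofReal_ne_top ENNReal.ofReal_ne_top

lemma volume_Qrect_toReal {d lam : ℝ} (hd : 0 < d) (hlam : 0 < lam) (k : ℕ) :
    (volume (Qrect d lam k)).toReal = (d/2^k/2) * (lam * (d/2^k)) := by
  rw [volume_Qrect hd hlam k, ENNReal.toReal_mul, ENNReal.toReal_ofReal (by positivity),
    ENNReal.toReal_ofReal (by positivity)]

lemma Qrect_disjoint {d lam : ℝ} (hd : 0 < d) {j k : ℕ} (hjk : j ≠ k) :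
    Disjoint (Qrect d lam j) (Qrect d lam k) := by
  have key : ∀ a b : ℕ, a < b → Disjoint (Qrect d lam a) (Qrect d lam b) := by
    intro a b hab
    rw [Set.disjoint_left]
    intro z hza hzb
    have h1 := (mem_Qrect.1 hza).1.2
    have h2 := (mem_Qrect.1 hzb).1.1
    have hpow : d/2^b ≤ d/2^a/2 := by
      rw [div_div, ← pow_succ]
      have h3 : (2:ℝ)^(a+1) ≤ 2^b := pow_le_pow_right₀ one_le_two hab
      gcongr
    linarith
  rcases hjk.lt_or_gt with h | h
  · exact key _ _ h
  · exact (key _ _ h).symm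

lemma Qrect_subset {d l lam : ℝ} (hl : 0 < l) (hld : l < d) (hd : d < 1) (hlam : lam = l/d)
    (k : ℕ) {z : ℂ} (hz : z ∈ Qrect d lam k) :
    (z ∈ convexHull ℝ ({1 - (d:ℂ) + (l:ℂ) * Complex.I, 1 - (d:ℂ) - (l:ℂ) * Complex.I, 1} : Set ℂ))
      ∧ z ∈ unitDisk := by
  have hd0 : (0:ℝ) < d := lt_trans hl hld
  have hδ0 : (0:ℝ) < d/2^k := by positivity
  have hδd : d/2^k ≤ d := by
    apply div_le_self hd0.le
    exact one_le_pow₀ (by norm_num)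
  obtain ⟨⟨hx1, hx2⟩, hy1, hy2⟩ := mem_Qrect.1 hz
  have hlam0 : 0 < lam := by rw [hlam]; positivity
  have hlam1 : lam < 1 := by rw [hlam, div_lt_one hd0]; exact hld
  have hyabs : |z.im| ≤ lam * (1 - z.re) := by
    rw [abs_le]
    constructor <;> nlinarith
  constructor
  · have h := mem_triangle d l hl hld hd (x := z.re) (y := z.im)
      (by nlinarith) (by nlinarith) (by rw [← hlam]; exact hyabs)
    rwa [Complex.re_add_im] at h
  · have hx0 : 0 < z.re := by nlinarith
    have hx1' : z.re < 1 := by nlinarith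
    have h1mx : 0 < 1 - z.re := by linarith
    have hy2' : z.im^2 < (1 - z.re)^2 := by
      have ha : z.im^2 < (lam * (d/2^k)/2)^2 := sq_lt_sq' hy1 hy2
      have hb : (lam * (d/2^k)/2)^2 < (1 - z.re)^2 := by
        have hc : lam * (d/2^k)/2 < 1 - z.re := by nlinarith
        have hc0 : 0 < lam * (d/2^k)/2 := by positivity
        nlinarith
      linarith
    have hsq : ‖z‖^2 < 1 := by
      rw [Complex.sq_norm, Complex.normSq_apply]
      nlinarith [mul_pos hx0 h1mx]
    have h : ‖z‖ < 1 := by nlinarith [norm_nonneg z]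
    simpa [unitDisk, Complex.dist_eq] using h

lemma Qrect_norm_bound {d lam : ℝ} (hd0 : 0 < d) (hlam0 : 0 < lam) (hlam1 : lam < 1) (k : ℕ)
    {z : ℂ} (hz : z ∈ Qrect d lam k) : ‖(1:ℂ) - z‖ ≤ Real.sqrt 2 * (d/2^k) := by
  obtain ⟨⟨hx1, hx2⟩, hy1, hy2⟩ := mem_Qrect.1 hz
  have hδ0 : (0:ℝ) < d/2^k := by positivity
  have hsq : ‖(1:ℂ) - z‖^2 ≤ (Real.sqrt 2 * (d/2^k))^2 := by
    rw [Complex.sq_norm, Complex.normSq_apply, mul_pow,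
      Real.sq_sqrt (by norm_num : (0:ℝ) ≤ 2)]
    simp only [Complex.sub_re, Complex.one_re, Complex.sub_im, Complex.one_im]
    have h1 : (1 - z.re)^2 < (d/2^k)^2 := sq_lt_sq' (by linarith) (by linarith)
    have h2 : z.im^2 < (d/2^k)^2 := by
      have ha : z.im^2 < (lam * (d/2^k)/2)^2 := sq_lt_sq' hy1 hy2
      have hlam2 : lam^2 < 1 := by nlinarith
      nlinarith [mul_pos hδ0 hδ0]
    nlinarith
  exact (pow_le_pow_iff_left₀ (norm_nonneg _) (by positivity) two_ne_zero).1 hsq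

/-- If `v` is a bounded radial weight, `|g|^p v` is bounded on `D`, and `|g|^p v`
is bounded away from zero on a Stolz-type triangle with vertices `1−d+li`, `1−d−li`, `1`,
then `f_c = g/(1−z)^c ∈ A^p_v` for all `c ∈ (1/p, 2/p)` and `‖f_c‖ → ∞` as `c → 2/p`. -/
theorem statement7 (p : ℝ) (hp : 1 < p) (v : ℂ → ℝ) (hv : IsRadialWeight v)
    (hvbdd : ∃ M : ℝ, ∀ z ∈ unitDisk, v z ≤ M)
    (g : ℂ → ℂ) (hg : DifferentiableOn ℂ g unitDisk)
    (h1 : ∃ M : ℝ, ∀ z ∈ unitDisk, ‖g z‖ ^ p * v z ≤ M)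
    (h2 : ∃ d l : ℝ, 0 < l ∧ l < d ∧ d < 1 ∧ ∃ m > (0:ℝ),
      ∀ z ∈ (convexHull ℝ
          ({1 - (d:ℂ) + (l:ℂ) * Complex.I, 1 - (d:ℂ) - (l:ℂ) * Complex.I, 1} : Set ℂ))
        ∩ unitDisk, m ≤ ‖g z‖ ^ p * v z) :
    (∀ c ∈ Set.Ioo (1/p) (2/p), MemBergman p v (fcFun g c)) ∧
      Tendsto (fun c => bergmanNorm p v (fcFun g c))
        (nhdsWithin (2/p) (Set.Iio (2/p))) atTop := by
  obtain ⟨M, hM⟩ := h1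
  have hp0 : (0:ℝ) < p := lt_trans zero_lt_one hp
  have hmem : ∀ c ∈ Set.Ioo (1/p) (2/p), MemBergman p v (fcFun g c) :=
    fun c hc => ⟨diff_fc g hg c, integrand_integrable p hp v hv g hg M hM c hc⟩
  refine ⟨hmem, ?_⟩
  obtain ⟨d, l, hl0, hld, hd1, m, hm0, hmlb⟩ := h2
  have hd0 : (0:ℝ) < d := lt_trans hl0 hld
  set lam : ℝ := l/d with hlam
  have hlam0 : 0 < lam := by rw [hlam]; positivity
  have hlam1 : lam < 1 := by rw [hlam, div_lt_one hd0]; exact hld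
  set LB : ℕ → ℝ → ℝ := fun k c =>
    (m/Real.pi) * Real.exp (Real.log (Real.sqrt 2 * (d/2^k)) * (-(c*p)))
      * ((d/2^k/2) * (lam * (d/2^k))) with hLBdef
  have hA : ∀ k : ℕ, (0:ℝ) < Real.sqrt 2 * (d/2^k) := fun k => by positivity
  -- per-rectangle lower bound
  have key1 : ∀ c ∈ Set.Ioo (1/p) (2/p), ∀ k : ℕ,
      LB k c ≤ ∫ z in Qrect d lam k, ‖fcFun g c z‖ ^ p * v z / Real.pi := by
    intro c hc k
    have hcp0 : 0 < c * p := mul_pos (lt_trans (by positivity) hc.1) hp0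
    have hIQ : IntegrableOn (fun z => ‖fcFun g c z‖ ^ p * v z / Real.pi) (Qrect d lam k) :=
      (integrand_integrable p hp v hv g hg M hM c hc).mono_set
        (fun z hz => (Qrect_subset hl0 hld hd1 hlam k hz).2)
    have hbd : ∀ z ∈ Qrect d lam k,
        (m/Real.pi) * Real.exp (Real.log (Real.sqrt 2 * (d/2^k)) * (-(c*p)))
          ≤ ‖fcFun g c z‖ ^ p * v z / Real.pi := by
      intro z hz
      obtain ⟨hzT, hzD⟩ := Qrect_subset hl0 hld hd1 hlam k hz
      have hgv : m ≤ ‖g z‖ ^ p * v z := hmlb z ⟨hzT, hzD⟩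
      have hnormpos : 0 < ‖(1:ℂ) - z‖ := norm_pos_iff.2 (one_sub_ne hzD)
      have hrp : Real.exp (Real.log (Real.sqrt 2 * (d/2^k)) * (-(c*p)))
          ≤ ‖(1:ℂ) - z‖ ^ (-(c*p)) := by
        rw [← Real.rpow_def_of_pos (hA k)]
        exact Real.rpow_le_rpow_of_nonpos hnormpos
          (Qrect_norm_bound hd0 hlam0 hlam1 k hz) (by linarith)
      have hmain : m * Real.exp (Real.log (Real.sqrt 2 * (d/2^k)) * (-(c*p)))
          ≤ (‖g z‖ ^ p * v z) * ‖(1:ℂ) - z‖ ^ (-(c*p)) :=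
        mul_le_mul hgv hrp (Real.exp_pos _).le
          (le_trans hm0.le hgv)
      have hEeq : ‖fcFun g c z‖ ^ p * v z / Real.pi
          = (‖g z‖ ^ p * v z) * ‖(1:ℂ) - z‖ ^ (-(c*p)) / Real.pi := by
        rw [norm_fc g c p hp0.le hzD]; ring
      rw [hEeq, div_mul_eq_mul_div]
      exact div_le_div_of_nonneg_right hmain Real.pi_pos.le
    have h := setIntegral_ge_of_const_le (measurableSet_Qrect d lam k)
      (volume_Qrect_ne_top hd0 hlam0 k) hbd hIQ
    rw [measureReal_def, volume_Qrect_toReal hd0 hlam0 k, smul_eq_mul, mul_comm] at h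
    exact h
  -- summing over rectangles
  have key2 : ∀ c ∈ Set.Ioo (1/p) (2/p), ∀ K : ℕ,
      (∑ k ∈ Finset.range K, LB k c) ≤ bergmanNormP p v (fcFun g c) := by
    intro c hc K
    have hInt : IntegrableOn (fun z => ‖fcFun g c z‖ ^ p * v z / Real.pi) unitDisk :=
      integrand_integrable p hp v hv g hg M hM c hc
    have hQD : ∀ k : ℕ, Qrect d lam k ⊆ unitDisk :=
      fun k z hz => (Qrect_subset hl0 hld hd1 hlam k hz).2
    have hU : (⋃ k ∈ Finset.range K, Qrect d lam k) ⊆ unitDisk :=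
      Set.iUnion₂_subset fun k _ => hQD k
    have hsum : ∫ z in (⋃ k ∈ Finset.range K, Qrect d lam k),
          ‖fcFun g c z‖ ^ p * v z / Real.pi
        = ∑ k ∈ Finset.range K, ∫ z in Qrect d lam k, ‖fcFun g c z‖ ^ p * v z / Real.pi :=
      integral_biUnion_finset (Finset.range K) (fun k _ => measurableSet_Qrect d lam k)
        (fun j _ k _ hjk => Qrect_disjoint hd0 hjk) (fun k _ => hInt.mono_set (hQD k))
    have hnonneg : 0 ≤ᵐ[volume.restrict unitDisk]
        fun z => ‖fcFun g c z‖ ^ p * v z / Real.pi := by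
      filter_upwards [ae_restrict_mem measurableSet_unitDisk] with z hz
      exact div_nonneg (mul_nonneg (Real.rpow_nonneg (norm_nonneg _) _) (hv.pos z hz).le)
        Real.pi_pos.le
    have hmono : ∫ z in (⋃ k ∈ Finset.range K, Qrect d lam k),
          ‖fcFun g c z‖ ^ p * v z / Real.pi ≤ bergmanNormP p v (fcFun g c) :=
      setIntegral_mono_set hInt hnonneg (HasSubset.Subset.eventuallyLE hU)
    calc (∑ k ∈ Finset.range K, LB k c)
        ≤ ∑ k ∈ Finset.range K, ∫ z in Qrect d lam k, ‖fcFun g c z‖ ^ p * v z / Real.pi :=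
          Finset.sum_le_sum fun k _ => key1 c hc k
      _ = _ := hsum.symm
      _ ≤ _ := hmono
  -- the value at the endpoint
  have key3 : ∀ k : ℕ, LB k (2/p) = m * lam / (4 * Real.pi) := by
    intro k
    have hδ0 : (0:ℝ) < d/2^k := by positivity
    have hexp : (2/p) * p = 2 := by field_simp
    rw [hLBdef]
    simp only []
    rw [hexp, ← Real.rpow_def_of_pos (hA k)]
    have h2 : (Real.sqrt 2 * (d/2^k)) ^ (-2:ℝ) = ((Real.sqrt 2 * (d/2^k))^2)⁻¹ := by
      rw [← Real.rpow_natCast (Real.sqrt 2 * (d/2^k)) 2, ← Real.rpow_neg (hA k).le]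
      norm_num
    rw [h2, mul_pow, Real.sq_sqrt (by norm_num : (0:ℝ) ≤ 2)]
    field_simp
    ring
  -- the blow-up of the p-th power of the norm
  have hPtend : Tendsto (fun c => bergmanNormP p v (fcFun g c))
      (nhdsWithin (2/p) (Set.Iio (2/p))) atTop := by
    rw [tendsto_atTop]
    intro N
    set β : ℝ := m * lam / (4 * Real.pi) with hβ
    have hβ0 : 0 < β := by rw [hβ]; positivity
    obtain ⟨K, hK⟩ := exists_nat_ge ((N+1)/β)
    have hKβ : N + 1 ≤ (K+1) * β := by
      have h : (N+1)/β ≤ (K:ℝ)+1 := le_trans hK (by linarith)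
      calc N+1 = ((N+1)/β)*β := by field_simp
      _ ≤ ((K:ℝ)+1)*β := mul_le_mul_of_nonneg_right h hβ0.le
    set S : ℝ → ℝ := fun c => ∑ k ∈ Finset.range (K+1), LB k c with hS
    have hS2 : S (2/p) = ((K:ℝ)+1) * β := by
      rw [hS]
      simp only []
      rw [Finset.sum_congr rfl (fun k _ => key3 k), Finset.sum_const, Finset.card_range,
        nsmul_eq_mul]
      push_cast
      ring
    have hScont : Continuous S := by
      refine continuous_finset_sum _ fun k _ => ?_
      exact (continuous_const.mul (Real.continuous_exp.comp
        (continuous_const.mul (continuous_id.mul continuous_const).neg))).mul continuous_const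
    have hev1 : ∀ᶠ c in nhdsWithin (2/p) (Set.Iio (2/p)), N < S c := by
      have h : ∀ᶠ c in nhds (2/p), N < S c :=
        (hScont.tendsto (2/p)).eventually (eventually_gt_nhds (by rw [hS2]; linarith))
      exact h.filter_mono nhdsWithin_le_nhds
    have hev2 : ∀ᶠ c in nhdsWithin (2/p) (Set.Iio (2/p)), c ∈ Set.Ioo (1/p) (2/p) := by
      have ha : ∀ᶠ c in nhds (2/p), 1/p < c :=
        eventually_gt_nhds (by rw [div_lt_div_iff_of_pos_right hp0]; norm_num)
      filter_upwards [ha.filter_mono nhdsWithin_le_nhds, self_mem_nhdsWithin] with c hc1 hc2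
      exact ⟨hc1, hc2⟩
    filter_upwards [hev1, hev2] with c hc1 hc2
    exact le_trans hc1.le (key2 c hc2 (K+1))
  exact (tendsto_rpow_atTop (by positivity : (0:ℝ) < 1/p)).comp hPtend
end
end

section
/- Let 1 < Q_L ≤ Q_U < ∞ and set m := min{(1/2)β((Q_U−1)/2, 1/2), π/2} and M := max{(1/2)β((Q_L−1)/2, 1/2), π/2}, where β is the Beta function. Then for every q ∈ [Q_L, Q_U] and every r ∈ [0,1): 2m ≤ (1−r)^{q−1} ∫₀^{2π} |1−re^{iθ}|^{−q} dθ ≤ 4M. In particular, ∫₀^{2π} dθ/|1−re^{iθ}|^q ≍ (1−r)^{1−q} with constants depending only on Q_L and Q_U. -/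
open MeasureTheory Complex Filter Topology

noncomputable section

section Statement10Aux
open MeasureTheory Real Set

lemma st10_normsq_eq (r θ : ℝ) :
    ‖(1:ℂ) - (r:ℂ) * Complex.exp ((θ:ℂ) * Complex.I)‖ = Real.sqrt (1 - 2*r*Real.cos θ + r^2) := by
  rw [Complex.norm_def, Complex.normSq_apply]
  congr 1
  simp [Complex.exp_mul_I, Complex.cos_ofReal_re, Complex.sin_ofReal_re]
  nlinarith [Real.sin_sq_add_cos_sq θ]

lemma st10_Dpos (r c : ℝ) (hr0 : 0 ≤ r) (hr1 : r < 1) (hc : |c| ≤ 1) :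
    0 < 1 - 2*r*c + r^2 := by
  have h1 : -1 ≤ c := neg_le_of_abs_le hc
  have h2 : c ≤ 1 := le_of_abs_le hc
  nlinarith

lemma st10_contF (r q : ℝ) (hr0 : 0 ≤ r) (hr1 : r < 1) :
    Continuous (fun θ => (1 - 2*r*Real.cos θ + r^2) ^ (-(q/2))) := by
  apply Continuous.rpow_const (by continuity)
  intro θ
  exact Or.inl (st10_Dpos r _ hr0 hr1 (Real.abs_cos_le_one θ)).ne'

lemma st10_step_interval (r q : ℝ) (hr0 : 0 ≤ r) (hr1 : r < 1) :
    (∫ θ in (0:ℝ)..(2*π), ‖(1:ℂ) - (r:ℂ) * Complex.exp ((θ:ℂ) * Complex.I)‖ ^ (-q)) =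
    2 * ∫ θ in Ioo (0:ℝ) π, (1 - 2*r*Real.cos θ + r^2) ^ (-(q/2)) := by
  have hnorm : ∀ θ : ℝ, ‖(1:ℂ) - (r:ℂ) * Complex.exp ((θ:ℂ) * Complex.I)‖ ^ (-q)
      = (1 - 2*r*Real.cos θ + r^2) ^ (-(q/2)) := by
    intro θ
    have hD := st10_Dpos r _ hr0 hr1 (Real.abs_cos_le_one θ)
    rw [st10_normsq_eq, Real.sqrt_eq_rpow, ← Real.rpow_mul (le_of_lt hD)]
    congr 1; ring
  have hcont := st10_contF r q hr0 hr1
  simp_rw [hnorm]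
  have hsplit := intervalIntegral.integral_add_adjacent_intervals
    (a := (0:ℝ)) (b := π) (c := 2*π)
    (hcont.intervalIntegrable (μ := volume) _ _) (hcont.intervalIntegrable (μ := volume) _ _)
  rw [← hsplit]
  have hsym : (∫ θ in π..(2*π), (1 - 2*r*Real.cos θ + r^2) ^ (-(q/2)))
      = ∫ θ in (0:ℝ)..π, (1 - 2*r*Real.cos θ + r^2) ^ (-(q/2)) := by
    have := intervalIntegral.integral_comp_sub_left
      (a := (0:ℝ)) (b := π) (fun θ => (1 - 2*r*Real.cos θ + r^2) ^ (-(q/2))) (2*π)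
    rw [show 2*π - π = π by ring, show 2*π - 0 = 2*π by ring] at this
    rw [← this]
    refine intervalIntegral.integral_congr (fun θ _ => ?_)
    have : Real.cos (2*π - θ) = Real.cos θ := by
      rw [Real.cos_sub]; simp
    rw [this]
  rw [hsym, intervalIntegral.integral_of_le Real.pi_pos.le,
    MeasureTheory.integral_Ioc_eq_integral_Ioo]
  ring

lemma st10_image_arctan : (fun t : ℝ => 2 * Real.arctan t) '' Ioi 0 = Ioo 0 π := by
  ext x
  constructor
  · rintro ⟨t, ht, rfl⟩
    have h1 : 0 < Real.arctan t := by
      have := Real.arctan_strictMono (mem_Ioi.1 ht); simpa using this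
    have h2 := Real.arctan_lt_pi_div_two t
    show 2 * Real.arctan t ∈ Ioo 0 π
    exact ⟨by nlinarith, by nlinarith⟩
  · rintro ⟨hx0, hxπ⟩
    refine ⟨Real.tan (x/2), Real.tan_pos_of_pos_of_lt_pi_div_two (by linarith) (by linarith), ?_⟩
    show 2 * Real.arctan (Real.tan (x/2)) = x
    rw [Real.arctan_tan (by linarith) (by linarith)]
    ring

lemma st10_step_cov (r q : ℝ) (hr0 : 0 ≤ r) (hr1 : r < 1) :
    ∫ θ in Ioo 0 π, (1 - 2*r*Real.cos θ + r^2) ^ (-(q/2)) =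
    ∫ t in Ioi (0:ℝ), 2*(1+t^2)^(q/2-1) * ((1-r)^2 + (1+r)^2*t^2) ^ (-(q/2)) := by
  rw [← st10_image_arctan,
    integral_image_eq_integral_abs_deriv_smul measurableSet_Ioi
      (f' := fun t => 2/(1+t^2))
      (fun t _ => by
        have := ((Real.hasDerivAt_arctan t).const_mul 2)
        exact this.hasDerivWithinAt.congr_deriv (by ring))
      (fun a _ b _ h => Real.arctan_injective (mul_left_cancel₀ two_ne_zero h))]
  refine setIntegral_congr_fun measurableSet_Ioi (fun t ht => ?_)
  have ht2 : (0:ℝ) < 1 + t^2 := by positivity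
  have hA : (0:ℝ) < (1-r)^2 + (1+r)^2*t^2 := by nlinarith
  have hcos : Real.cos (2 * Real.arctan t) = 2/(1+t^2) - 1 := by
    rw [Real.cos_two_mul, Real.cos_sq_arctan]; ring
  show |2/(1+t^2)| • (1 - 2*r*Real.cos (2 * Real.arctan t) + r^2) ^ (-(q/2)) = _
  have key : 1 - 2*r*Real.cos (2 * Real.arctan t) + r^2
      = ((1-r)^2 + (1+r)^2*t^2)/(1+t^2) := by
    rw [hcos]; field_simp; ring
  rw [key, Real.div_rpow hA.le ht2.le, smul_eq_mul, abs_of_pos (by positivity),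
    Real.rpow_sub ht2, Real.rpow_one, Real.rpow_neg ht2.le]
  field_simp

lemma st10_main_identity (q r : ℝ) (hr0 : 0 ≤ r) (hr1 : r < 1) :
    (1 - r) ^ (q - 1) *
      ∫ θ in (0:ℝ)..(2*π), ‖(1:ℂ) - (r:ℂ) * Complex.exp ((θ:ℂ) * Complex.I)‖ ^ (-q)
    = (4/(1+r)) * ∫ u in Ioi (0:ℝ),
        (1 + ((1-r)/(1+r))^2*u^2)^(q/2-1) * (1+u^2)^(-(q/2)) := by
  have h1r : (0:ℝ) < 1 - r := by linarith
  have h1r' : (0:ℝ) < 1 + r := by linarith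
  set s := (1-r)/(1+r) with hs_def
  have hs : 0 < s := by positivity
  rw [st10_step_interval r q hr0 hr1, st10_step_cov r q hr0 hr1]
  have hscale := MeasureTheory.integral_comp_mul_left_Ioi
    (fun t => 2*(1+t^2)^(q/2-1) * ((1-r)^2 + (1+r)^2*t^2) ^ (-(q/2))) 0 hs
  rw [mul_zero, smul_eq_mul] at hscale
  have h2 : (∫ t in Ioi (0:ℝ), 2*(1+t^2)^(q/2-1) * ((1-r)^2 + (1+r)^2*t^2) ^ (-(q/2)))
      = s * ∫ u in Ioi (0:ℝ), 2*(1+(s*u)^2)^(q/2-1) * ((1-r)^2 + (1+r)^2*(s*u)^2) ^ (-(q/2)) := by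
    rw [hscale, ← mul_assoc, mul_inv_cancel₀ hs.ne', one_mul]
  rw [h2]
  have h3 : (∫ u in Ioi (0:ℝ), 2*(1+(s*u)^2)^(q/2-1) * ((1-r)^2 + (1+r)^2*(s*u)^2) ^ (-(q/2)))
      = 2 * (1-r)^(-q) * ∫ u in Ioi (0:ℝ), (1 + s^2*u^2)^(q/2-1) * (1+u^2)^(-(q/2)) := by
    rw [← MeasureTheory.integral_const_mul (2*(1-r)^(-q))
      (fun u => (1 + s^2*u^2)^(q/2-1) * (1+u^2)^(-(q/2)))]
    refine setIntegral_congr_fun measurableSet_Ioi (fun u hu => ?_)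
    have e1 : (1-r)^2 + (1+r)^2*(s*u)^2 = (1-r)^2 * (1+u^2) := by
      rw [hs_def]; field_simp
    have e2 : ((1-r)^2 * (1+u^2)) ^ (-(q/2)) = (1-r)^(-q) * (1+u^2)^(-(q/2)) := by
      rw [Real.mul_rpow (by positivity) (by positivity), ← Real.rpow_natCast (1-r) 2,
        ← Real.rpow_mul h1r.le]
      norm_num
      left; congr 1; ring
    rw [e1, e2, mul_pow]
    ring
  rw [h3]
  set J := ∫ u in Ioi (0:ℝ), (1 + s^2*u^2)^(q/2-1) * (1+u^2)^(-(q/2)) with hJ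
  have hpow : (1-r)^(q-1) * (1-r)^(-q) = (1-r)⁻¹ := by
    rw [← Real.rpow_add h1r, show q-1 + -q = -1 by ring, Real.rpow_neg_one]
  rw [show (1-r)^(q-1) * (2*(s*(2*(1-r)^(-q)*J))) = ((1-r)^(q-1)*(1-r)^(-q)) * (4*s*J) by ring,
    hpow, hs_def]
  field_simp

lemma st10_image_phi : (fun t : ℝ => Real.sqrt (1/t - 1)) '' Ioo 0 1 = Ioi 0 := by
  ext u
  constructor
  · rintro ⟨t, ⟨ht0, ht1⟩, rfl⟩
    have : 0 < 1/t - 1 := by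
      rw [sub_pos, lt_div_iff₀ ht0]; linarith
    exact mem_Ioi.2 (Real.sqrt_pos.2 this)
  · intro hu
    have hu' : (0:ℝ) < u := hu
    refine ⟨1/(1+u^2), ⟨by positivity, ?_⟩, ?_⟩
    · rw [div_lt_one (by positivity)]; nlinarith
    · have : 1/(1/(1+u^2)) - 1 = u^2 := by field_simp; ring
      show Real.sqrt (1/(1/(1+u^2)) - 1) = u
      rw [this, Real.sqrt_sq hu'.le]

lemma st10_deriv_phi {t : ℝ} (ht0 : 0 < t) (ht1 : t < 1) :
    HasDerivAt (fun t : ℝ => Real.sqrt (1/t - 1))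
      (-(1/t^2) / (2 * Real.sqrt (1/t - 1))) t := by
  have harg : 0 < 1/t - 1 := by rw [sub_pos, lt_div_iff₀ ht0]; linarith
  have h1 : HasDerivAt (fun t : ℝ => 1/t - 1) (-(1/t^2)) t := by
    simpa using ((hasDerivAt_inv ht0.ne').sub_const 1)
  have h2 := (Real.hasDerivAt_sqrt harg.ne').comp t h1
  exact h2.congr_deriv (by ring)

lemma st10_Abeta_eq (q : ℝ) :
    ∫ u in Ioi (0:ℝ), (1+u^2)^(-(q/2)) = (1/2) * betaFn ((q-1)/2) (1/2) := by
  rw [betaFn, intervalIntegral.integral_of_le zero_le_one,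
    MeasureTheory.integral_Ioc_eq_integral_Ioo,
    ← st10_image_phi, integral_image_eq_integral_abs_deriv_smul measurableSet_Ioo
      (f' := fun t => -(1/t^2) / (2 * Real.sqrt (1/t - 1)))
      (fun t ht => (st10_deriv_phi ht.1 ht.2).hasDerivWithinAt)
      (fun a ha b hb h => by
        have ha' : 0 < 1/a - 1 := by rw [sub_pos, lt_div_iff₀ ha.1]; linarith [ha.2]
        have hb' : 0 < 1/b - 1 := by rw [sub_pos, lt_div_iff₀ hb.1]; linarith [hb.2]
        have := congrArg (fun x : ℝ => x^2) h
        simp only [Real.sq_sqrt ha'.le, Real.sq_sqrt hb'.le] at this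
        field_simp at this
        simp only [one_div] at this
        exact inv_injective (sub_left_inj.mp this))]
  rw [← MeasureTheory.integral_const_mul]
  refine setIntegral_congr_fun measurableSet_Ioo (fun t ht => ?_)
  obtain ⟨ht0, ht1⟩ := ht
  have h1t : (0:ℝ) < 1 - t := by linarith
  have harg : 0 < 1/t - 1 := by rw [sub_pos, lt_div_iff₀ ht0]; linarith
  show |(-(1/t^2) / (2 * Real.sqrt (1/t - 1)))| • (1 + Real.sqrt (1/t - 1)^2)^(-(q/2))
      = (1/2) * (t ^ ((q-1)/2 - 1) * (1 - t) ^ ((1:ℝ)/2 - 1))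
  rw [Real.sq_sqrt harg.le, show 1 + (1/t - 1) = 1/t by ring]
  have e0 : (1/t) ^ (-(q/2)) = t ^ (q/2) := by
    rw [one_div, Real.inv_rpow ht0.le, ← Real.rpow_neg ht0.le, neg_neg]
  have e1 : Real.sqrt (1/t - 1) = (1-t) ^ ((1:ℝ)/2) * t ^ (-(1:ℝ)/2) := by
    rw [show 1/t - 1 = (1-t)/t by field_simp, Real.sqrt_div h1t.le,
      Real.sqrt_eq_rpow, Real.sqrt_eq_rpow, div_eq_mul_inv, ← Real.rpow_neg ht0.le]
    norm_num
  have e2 : |(-(1/t^2) / (2 * Real.sqrt (1/t - 1)))|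
      = (1/2) * t^(-(2:ℝ)) * ((1-t) ^ (-(1:ℝ)/2) * t ^ ((1:ℝ)/2)) := by
    rw [abs_div, abs_neg, abs_of_pos (by positivity : (0:ℝ) < 1/t^2),
      abs_of_pos (by positivity : (0:ℝ) < 2 * Real.sqrt (1/t - 1)), e1]
    rw [show t^(-(2:ℝ)) = (t^(2:ℕ))⁻¹ by
      rw [← Real.rpow_natCast t 2, ← Real.rpow_neg ht0.le]; norm_num]
    rw [show (1-t)^(-(1:ℝ)/2) = ((1-t)^((1:ℝ)/2))⁻¹ by
      rw [← Real.rpow_neg h1t.le]; norm_num]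
    rw [show t^((1:ℝ)/2) = (t^(-(1:ℝ)/2))⁻¹ by
      rw [← Real.rpow_neg ht0.le]; norm_num]
    field_simp
  rw [smul_eq_mul, e0, e2]
  rw [show t ^ ((q-1)/2 - 1) = t^(-(2:ℝ)) * t^((1:ℝ)/2) * t^(q/2) by
    rw [← Real.rpow_add ht0, ← Real.rpow_add ht0]; congr 1; ring]
  rw [show (1-t:ℝ) ^ ((1:ℝ)/2 - 1) = (1-t)^(-(1:ℝ)/2) by norm_num]
  ring

lemma st10_integrable_A (q : ℝ) (hq : 1 < q) :
    IntegrableOn (fun u : ℝ => (1+u^2)^(-(q/2))) (Ioi 0) := by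
  have hcont : Continuous (fun u : ℝ => (1+u^2)^(-(q/2))) := by
    apply Continuous.rpow_const (by continuity)
    intro u; exact Or.inl (by positivity)
  have h1 : IntegrableOn (fun u : ℝ => (1+u^2)^(-(q/2))) (Ioc 0 1) :=
    hcont.integrableOn_Ioc
  have h2 : IntegrableOn (fun u : ℝ => (1+u^2)^(-(q/2))) (Ioi 1) := by
    refine (integrableOn_Ioi_rpow_of_lt (by linarith : -q < -1) one_pos).mono'
      hcont.aestronglyMeasurable ?_
    filter_upwards [ae_restrict_mem measurableSet_Ioi] with u hu
    have hu1 : (1:ℝ) ≤ u := le_of_lt hu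
    have e1 : u ^ (-q) = (u^2) ^ (-(q/2)) := by
      rw [← Real.rpow_natCast u 2, ← Real.rpow_mul (by linarith)]
      congr 1; ring
    rw [Real.norm_eq_abs, _root_.abs_of_nonneg (Real.rpow_nonneg (by positivity) _), e1]
    exact Real.rpow_le_rpow_of_nonpos (by nlinarith) (by nlinarith) (by linarith)
  have : Ioi (0:ℝ) = Ioc 0 1 ∪ Ioi 1 := by
    rw [Ioc_union_Ioi_eq_Ioi]; norm_num
  rw [this]
  exact h1.union h2

lemma st10_J_bounds (q s : ℝ) (hq : 1 < q) (hs0 : 0 < s) (hs1 : s ≤ 1) :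
    min (∫ u in Ioi (0:ℝ), (1+u^2)^(-(q/2))) (π/2)
      ≤ (∫ u in Ioi (0:ℝ), (1+s^2*u^2)^(q/2-1)*(1+u^2)^(-(q/2)))
    ∧ (∫ u in Ioi (0:ℝ), (1+s^2*u^2)^(q/2-1)*(1+u^2)^(-(q/2)))
      ≤ max (∫ u in Ioi (0:ℝ), (1+u^2)^(-(q/2))) (π/2) := by
  have hπ : (∫ u in Ioi (0:ℝ), (1+u^2)⁻¹) = π/2 := by
    rw [integral_Ioi_inv_one_add_sq]; simp
  have hinv : IntegrableOn (fun u : ℝ => (1+u^2)⁻¹) (Ioi (0:ℝ)) :=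
    integrable_inv_one_add_sq.integrableOn
  have hA := st10_integrable_A q hq
  have hconth : Continuous (fun u : ℝ => (1+s^2*u^2)^(q/2-1)*(1+u^2)^(-(q/2))) := by
    apply Continuous.mul
    · exact Continuous.rpow_const (by continuity) (fun u => Or.inl (by positivity))
    · exact Continuous.rpow_const (by continuity) (fun u => Or.inl (by positivity))
  have hinv_eq : ∀ u:ℝ, ((1:ℝ)+u^2)⁻¹ = (1+u^2)^(q/2-1)*(1+u^2)^(-(q/2)) := by
    intro u
    rw [← Real.rpow_add (by positivity), show q/2-1 + -(q/2) = -1 by ring, Real.rpow_neg_one]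
  have hbase : ∀ u:ℝ, (1:ℝ) ≤ 1+s^2*u^2 := fun u => by nlinarith
  have hbase2 : ∀ u:ℝ, (1:ℝ)+s^2*u^2 ≤ 1+u^2 := fun u => by
    nlinarith [mul_nonneg (mul_nonneg (sub_nonneg.2 hs1) (by linarith : (0:ℝ) ≤ 1+s)) (sq_nonneg u)]
  rcases le_total 2 q with h2q | hq2
  · have he : (0:ℝ) ≤ q/2 - 1 := by linarith
    have hub : ∀ u:ℝ, (1+s^2*u^2)^(q/2-1)*(1+u^2)^(-(q/2)) ≤ (1+u^2)⁻¹ := by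
      intro u
      rw [hinv_eq u]
      exact mul_le_mul_of_nonneg_right
        (Real.rpow_le_rpow (by positivity) (hbase2 u) he)
        (Real.rpow_nonneg (by positivity) _)
    have hlb : ∀ u:ℝ, (1+u^2:ℝ)^(-(q/2)) ≤ (1+s^2*u^2)^(q/2-1)*(1+u^2)^(-(q/2)) := by
      intro u
      exact le_mul_of_one_le_left (Real.rpow_nonneg (by positivity) _)
        (Real.one_le_rpow (hbase u) he)
    have hinth : IntegrableOn (fun u : ℝ => (1+s^2*u^2)^(q/2-1)*(1+u^2)^(-(q/2))) (Ioi 0) := by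
      refine hinv.mono' hconth.aestronglyMeasurable ?_
      filter_upwards with u
      rw [Real.norm_eq_abs, _root_.abs_of_nonneg (by positivity)]
      exact hub u
    constructor
    · refine le_trans (min_le_left _ _) ?_
      exact setIntegral_mono_on hA hinth measurableSet_Ioi (fun u _ => hlb u)
    · refine le_trans ?_ (le_max_right _ _)
      rw [← hπ]
      exact setIntegral_mono_on hinth hinv measurableSet_Ioi (fun u _ => hub u)
  · have he : q/2 - 1 ≤ 0 := by linarith
    have hub : ∀ u:ℝ, (1+s^2*u^2)^(q/2-1)*(1+u^2)^(-(q/2)) ≤ (1+u^2)^(-(q/2)) := by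
      intro u
      exact mul_le_of_le_one_left (Real.rpow_nonneg (by positivity) _)
        (Real.rpow_le_one_of_one_le_of_nonpos (hbase u) he)
    have hlb : ∀ u:ℝ, ((1:ℝ)+u^2)⁻¹ ≤ (1+s^2*u^2)^(q/2-1)*(1+u^2)^(-(q/2)) := by
      intro u
      rw [hinv_eq u]
      exact mul_le_mul_of_nonneg_right
        (Real.rpow_le_rpow_of_nonpos (by positivity) (hbase2 u) he)
        (Real.rpow_nonneg (by positivity) _)
    have hinth : IntegrableOn (fun u : ℝ => (1+s^2*u^2)^(q/2-1)*(1+u^2)^(-(q/2))) (Ioi 0) := by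
      refine hA.mono' hconth.aestronglyMeasurable ?_
      filter_upwards with u
      rw [Real.norm_eq_abs, _root_.abs_of_nonneg (by positivity)]
      exact hub u
    constructor
    · refine le_trans (min_le_right _ _) ?_
      rw [← hπ]
      exact setIntegral_mono_on hinv hinth measurableSet_Ioi (fun u _ => hlb u)
    · refine le_trans ?_ (le_max_left _ _)
      exact setIntegral_mono_on hinth hA measurableSet_Ioi (fun u _ => hub u)

lemma st10_A_mono (q q' : ℝ) (hq : 1 < q) (hqq : q ≤ q') :
    (∫ u in Ioi (0:ℝ), (1+u^2)^(-(q'/2))) ≤ ∫ u in Ioi (0:ℝ), (1+u^2)^(-(q/2)) := by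
  refine setIntegral_mono_on (st10_integrable_A q' (by linarith)) (st10_integrable_A q hq)
    measurableSet_Ioi (fun u _ => ?_)
  exact Real.rpow_le_rpow_of_exponent_le (by nlinarith [sq_nonneg u]) (by linarith)

lemma st10_A_nonneg (q : ℝ) : 0 ≤ ∫ u in Ioi (0:ℝ), (1+u^2)^(-(q/2)) :=
  setIntegral_nonneg measurableSet_Ioi (fun u _ => Real.rpow_nonneg (by positivity) _)

end Statement10Aux

/-- Uniform two-sided estimate
`2m ≤ (1−r)^{q−1} ∫₀^{2π} |1−re^{iθ}|^{−q} dθ ≤ 4M` for `q ∈ [Q_L, Q_U]`, `r ∈ [0,1)`. -/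
theorem statement10 (QL QU : ℝ) (h1 : 1 < QL) (h2 : QL ≤ QU) :
    ∀ q ∈ Set.Icc QL QU, ∀ r ∈ Set.Ico (0:ℝ) 1,
      2 * min ((1/2) * betaFn ((QU - 1)/2) (1/2)) (Real.pi / 2) ≤
        (1 - r) ^ (q - 1) *
          ∫ θ in (0:ℝ)..(2 * Real.pi),
            ‖1 - ((r:ℝ):ℂ) * Complex.exp ((θ:ℂ) * Complex.I)‖ ^ (-q) ∧
      (1 - r) ^ (q - 1) *
          ∫ θ in (0:ℝ)..(2 * Real.pi),
            ‖1 - ((r:ℝ):ℂ) * Complex.exp ((θ:ℂ) * Complex.I)‖ ^ (-q) ≤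
        4 * max ((1/2) * betaFn ((QL - 1)/2) (1/2)) (Real.pi / 2) := by
  intro q hq r hr
  obtain ⟨hqL, hqU⟩ := hq
  obtain ⟨hr0, hr1⟩ := hr
  have hq1 : 1 < q := lt_of_lt_of_le h1 hqL
  have h1r : (0:ℝ) < 1 - r := by linarith
  have h1r' : (0:ℝ) < 1 + r := by linarith
  have hs0 : 0 < (1-r)/(1+r) := by positivity
  have hs1 : (1-r)/(1+r) ≤ 1 := by rw [div_le_one h1r']; linarith
  have hid := st10_main_identity q r hr0 hr1
  have hJb := st10_J_bounds q ((1-r)/(1+r)) hq1 hs0 hs1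
  set J := ∫ u in Set.Ioi (0:ℝ), (1+((1-r)/(1+r))^2*u^2)^(q/2-1)*(1+u^2)^(-(q/2)) with hJdef
  have hAmin := st10_A_mono q QU hq1 hqU
  have hAmax := st10_A_mono QL q h1 hqL
  have hAU := st10_Abeta_eq QU
  have hAL := st10_Abeta_eq QL
  have hJlow : min ((1/2) * betaFn ((QU - 1)/2) (1/2)) (Real.pi / 2) ≤ J := by
    refine le_trans ?_ hJb.1
    exact min_le_min (by rw [← hAU]; exact hAmin) le_rfl
  have hJhigh : J ≤ max ((1/2) * betaFn ((QL - 1)/2) (1/2)) (Real.pi / 2) := by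
    refine le_trans hJb.2 ?_
    exact max_le_max (by rw [← hAL]; exact hAmax) le_rfl
  have hJ0 : 0 ≤ J := by
    refine le_trans ?_ hJb.1
    exact le_min (st10_A_nonneg q) (by positivity)
  rw [hid]
  constructor
  · have h24 : 2 ≤ 4/(1+r) := by rw [le_div_iff₀ h1r']; linarith
    calc 2 * min ((1/2) * betaFn ((QU - 1)/2) (1/2)) (Real.pi / 2)
        ≤ 2 * J := by linarith
      _ ≤ (4/(1+r)) * J := by nlinarith
  · have h44 : 4/(1+r) ≤ 4 := by rw [div_le_iff₀ h1r']; linarith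
    calc (4/(1+r)) * J ≤ 4 * J := by nlinarith
      _ ≤ 4 * max ((1/2) * betaFn ((QL - 1)/2) (1/2)) (Real.pi / 2) := by linarith
end
end
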